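/- Let q ≥ 2, N ≥ 0, 0 ≤ e ≤ N be integers, let n ∈ S_{q,N}, and let j ∈ {0,…,q−1}. Let (K_j)^e denote the composition of e single type-j deletion operators (applied at arbitrary positions), mapping H_{q,N} to H_{q,N−e}. If n_j ≥ e, then (K_j)^e D_n = √(C(N−e; n−e·u_j)/C(N;n)) · D_{n−e·u_j}; if n_j < e, then (K_j)^e D_n = 0. -/
import Mathlib


/-- The discrete simplex `S_{q,N}`: tuples of naturals of length `q` summing to `N`. -/
def simplex (q N : ℕ) : Finset (Fin q → ℕ) := Finset.Nat.antidiagonalTuple q N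

/-- Multinomial coefficient `C(∑ n; n)` for a tuple of naturals. -/
def multinat {q : ℕ} (n : Fin q → ℕ) : ℕ := Nat.multinomial Finset.univ n

/-- Multinomial coefficient for an integer tuple: `0` if some entry is negative. -/
def multZ {q : ℕ} (n : Fin q → ℤ) : ℕ :=
  if ∀ i, 0 ≤ n i then Nat.multinomial Finset.univ (fun i => (n i).toNat) else 0

/-- The `N`-qudit space `H_{q,N}`: complex-valued functions on strings `Fin N → Fin q`. -/
abbrev Hsp (q N : ℕ) := (Fin N → Fin q) → ℂ

/-- The inner product `⟨u,v⟩ = ∑_x conj (u x) · v x` on `H_{q,N}`. -/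
noncomputable def hinner {q N : ℕ} (u v : Hsp q N) : ℂ :=
  ∑ x : Fin N → Fin q, (starRingEnd ℂ) (u x) * v x

/-- The composition of a string `x : Fin N → Fin q`: `compn x i = #{k : x k = i}`. -/
def compn {q N : ℕ} (x : Fin N → Fin q) : Fin q → ℕ :=
  fun i => (Finset.univ.filter (fun k => x k = i)).card

/-- The Dicke state `D_n = C(N;n)^{-1/2} ∑_{x : comp x = n} δ_x`. -/
noncomputable def dicke {q N : ℕ} (n : Fin q → ℕ) : Hsp q N :=
  fun x => if compn x = n then (((Real.sqrt (multinat n))⁻¹ : ℝ) : ℂ) else 0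

/-- The type-`j` deletion operator at position `i`: `(delAt j i v) y = v (y with j inserted
at position i)`; equivalently `delAt j i δ_x = [x i = j] · δ_{x∼i}`. -/
def delAt {q M : ℕ} (j : Fin q) (i : Fin (M + 1)) (v : Hsp q (M + 1)) : Hsp q M :=
  fun y => v (i.insertNth j y)

/-- Iterated deletion: given a choice of a position `pos m : Fin (m+1)` for every
dimension `m`, apply single deletions of types `w 0, w 1, …` in succession, each at the
chosen (arbitrary) position. -/
def EdelP {q : ℕ} (pos : ∀ m : ℕ, Fin (m + 1)) :
    {t : ℕ} → (Fin t → Fin q) → {M : ℕ} → Hsp q (M + t) → Hsp q M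
  | 0, _, _, v => v
  | t + 1, w, M, v => EdelP pos (fun k => w k.succ) (delAt (w 0) (pos (M + t)) v)

-- AUX
lemma multinat_pos {q : ℕ} (n : Fin q → ℕ) : 0 < multinat n := Nat.multinomial_pos _ _

lemma EdelP_zero {q : ℕ} (pos : ∀ m : ℕ, Fin (m + 1)) :
    ∀ {t : ℕ} (w : Fin t → Fin q) {M : ℕ}, EdelP pos w (0 : Hsp q (M + t)) = 0 := by
  intro t
  induction t with
  | zero => intro w M; rfl
  | succ t ih =>
    intro w M
    show EdelP pos (fun k => w k.succ) (delAt (w 0) (pos (M + t)) 0) = 0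
    have : delAt (w 0) (pos (M + t)) (0 : Hsp q (M + t + 1)) = 0 := rfl
    rw [this, ih]

lemma EdelP_smul {q : ℕ} (pos : ∀ m : ℕ, Fin (m + 1)) (c : ℂ) :
    ∀ {t : ℕ} (w : Fin t → Fin q) {M : ℕ} (v : Hsp q (M + t)),
      EdelP pos w (c • v) = c • EdelP pos w v := by
  intro t
  induction t with
  | zero => intro w M v; rfl
  | succ t ih =>
    intro w M v
    show EdelP pos (fun k => w k.succ) (delAt (w 0) (pos (M + t)) (c • v)) = _
    have : delAt (w 0) (pos (M + t)) (c • v) = c • delAt (w 0) (pos (M + t)) v := rfl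
    rw [this, ih]
    rfl

lemma compn_insertNth {q M : ℕ} (j : Fin q) (i : Fin (M + 1)) (y : Fin M → Fin q)
    (i' : Fin q) :
    compn (i.insertNth j y) i' = (if j = i' then 1 else 0) + compn y i' := by
  simp only [compn, Finset.card_filter]
  rw [Fin.sum_univ_succAbove _ i]
  simp [Fin.insertNth_apply_same, Fin.insertNth_apply_succAbove]

lemma delAt_dicke_zero {q M : ℕ} (j : Fin q) (i : Fin (M + 1)) (n : Fin q → ℕ)
    (hj : n j = 0) : delAt j i (dicke (N := M + 1) n) = 0 := by
  funext y
  show dicke n (i.insertNth j y) = 0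
  rw [dicke, if_neg]
  intro h
  have := congrFun h j
  rw [compn_insertNth, if_pos rfl, hj] at this
  omega

lemma delAt_dicke {q M : ℕ} (j : Fin q) (i : Fin (M + 1)) (n : Fin q → ℕ)
    (hj : 1 ≤ n j) :
    delAt j i (dicke (N := M + 1) n) =
      ((Real.sqrt ((multinat (Function.update n j (n j - 1)) : ℝ) / (multinat n : ℝ)) : ℝ) : ℂ) •
        dicke (N := M) (Function.update n j (n j - 1)) := by
  set n' := Function.update n j (n j - 1) with hn'
  funext y
  show dicke n (i.insertNth j y) = _
  have hiff : compn (i.insertNth j y) = n ↔ compn y = n' := by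
    constructor
    · intro h
      funext i'
      have := congrFun h i'
      rw [compn_insertNth] at this
      by_cases hij : j = i'
      · subst hij
        simp only [if_pos] at this
        simp only [hn', Function.update_self]
        omega
      · simp only [hn', Function.update_of_ne (Ne.symm hij)]
        simpa [hij] using this
    · intro h
      funext i'
      rw [compn_insertNth, congrFun h i']
      by_cases hij : j = i'
      · subst hij; simp [hn']; omega
      · simp [hn', Function.update_of_ne (Ne.symm hij), hij]
  by_cases h : compn y = n'
  · rw [dicke, if_pos (hiff.mpr h), Pi.smul_apply, dicke, if_pos h]
    have h1 : (0:ℝ) < (multinat n : ℝ) := by exact_mod_cast multinat_pos n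
    have h2 : (0:ℝ) < (multinat n' : ℝ) := by exact_mod_cast multinat_pos n'
    rw [smul_eq_mul, ← Complex.ofReal_mul]
    congr 1
    have ha : Real.sqrt (multinat n) ≠ 0 := ne_of_gt (Real.sqrt_pos.mpr h1)
    have hb : Real.sqrt (multinat n') ≠ 0 := ne_of_gt (Real.sqrt_pos.mpr h2)
    rw [Real.sqrt_div h2.le]
    field_simp
  · rw [dicke, if_neg (fun hc => h (hiff.mp hc)), Pi.smul_apply, dicke, if_neg h, smul_zero]

lemma EdelP_const_dicke {q : ℕ} (pos : ∀ m : ℕ, Fin (m + 1)) (j : Fin q) :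
    ∀ (e : ℕ) {M : ℕ} (n : Fin q → ℕ),
    (e ≤ n j →
      EdelP pos (fun _ : Fin e => j) (dicke (N := M + e) n) =
        ((Real.sqrt ((multinat (Function.update n j (n j - e)) : ℝ) / (multinat n : ℝ)) : ℝ) : ℂ) •
          dicke (N := M) (Function.update n j (n j - e))) ∧
    (n j < e → EdelP pos (fun _ : Fin e => j) (dicke (N := M + e) n) = (0 : Hsp q M)) := by
  intro e
  induction e with
  | zero =>
    intro M n
    refine ⟨fun _ => ?_, fun h => absurd h (by omega)⟩
    show dicke n = _
    have h1 : (0:ℝ) < (multinat n : ℝ) := by exact_mod_cast multinat_pos n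
    rw [Nat.sub_zero, Function.update_eq_self, div_self (ne_of_gt h1), Real.sqrt_one]
    simp
  | succ e ih =>
    intro M n
    have hstep : EdelP pos (fun _ : Fin (e+1) => j) (dicke (N := M + (e+1)) n) =
        EdelP pos (fun _ : Fin e => j)
          (delAt j (pos (M + e)) (dicke (N := M + e + 1) n)) := rfl
    constructor
    · intro he
      have hj : 1 ≤ n j := by omega
      set n' := Function.update n j (n j - 1) with hn'
      have hupdate : Function.update n' j (n' j - e) = Function.update n j (n j - (e+1)) := by
        simp only [hn', Function.update_self, Function.update_idem]
        have : n j - 1 - e = n j - (e+1) := by omega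
        rw [this]
      have hn'j : e ≤ n' j := by rw [hn', Function.update_self]; omega
      rw [hstep, delAt_dicke j _ n hj, EdelP_smul, (ih n').1 hn'j, smul_smul,
        ← Complex.ofReal_mul, hupdate]
      congr 2
      have h1 : (0:ℝ) < (multinat n : ℝ) := by exact_mod_cast multinat_pos n
      have h2 : (0:ℝ) < (multinat n' : ℝ) := by exact_mod_cast multinat_pos n'
      have h3 : (0:ℝ) ≤ (multinat (Function.update n j (n j - (e+1))) : ℝ) := by positivity
      rw [← Real.sqrt_mul (by positivity)]
      congr 1
      field_simp
      ring
    · intro he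
      rw [hstep]
      by_cases hj : n j = 0
      · rw [delAt_dicke_zero j _ n hj, EdelP_zero]
      · have hj1 : 1 ≤ n j := by omega
        set n' := Function.update n j (n j - 1) with hn'
        have hn'j : n' j < e := by rw [hn', Function.update_self]; omega
        rw [delAt_dicke j _ n hj1, EdelP_smul, (ih n').2 hn'j, smul_zero]


/-- the `e`-th power of the type-`j` deletion operator (a composition of `e`
single type-`j` deletions, applied at arbitrary positions) acting on a Dicke state: if
`n j ≥ e` then `(K_j)^e D_n = √(C(N−e; n−e·u_j)/C(N;n)) • D_{n−e·u_j}`, and if `n j < e`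
then `(K_j)^e D_n = 0`.  (Here `N = M + e`, so `0 ≤ e ≤ N`, and `q ≥ 2`.) -/
theorem deletion_power_on_dicke (q M e : ℕ) (hq : 2 ≤ q) (n : Fin q → ℕ)
    (hn : ∑ i, n i = M + e) (j : Fin q) (pos : ∀ m : ℕ, Fin (m + 1)) :
    (e ≤ n j →
      EdelP pos (fun _ : Fin e => j) (dicke (N := M + e) n) =
        ((Real.sqrt ((multinat (Function.update n j (n j - e)) : ℝ) / (multinat n : ℝ)) : ℝ) : ℂ) •
          dicke (N := M) (Function.update n j (n j - e))) ∧
    (n j < e → EdelP pos (fun _ : Fin e => j) (dicke (N := M + e) n) = (0 : Hsp q M)) := by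
  exact EdelP_const_dicke pos j e n
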